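/- Let ℓ ≥ 0 be an integer, set ρ_j = ℓ/2 + 1 − j for j = 1,…,ℓ+1, and define the Baxter kernel Q(x,y|s) = 2^{ℓ+1} exp( Σ_{j=1}^{ℓ+1}(is − ρ_j)(x_j − y_j) − π Σ_{k=1}^{ℓ}( e^{2(x_k−y_k)} + e^{2(y_{k+1}−x_k)} ) − π e^{2(x_{ℓ+1}−y_{ℓ+1})} ) for x, y ∈ ℝ^{ℓ+1} and s ∈ ℂ. Then for all s, s' ∈ ℂ and all x, y ∈ ℝ^{ℓ+1} both iterated kernels converge absolutely and ∫_{ℝ^{ℓ+1}} Q(x,z|s) Q(z,y|s') dz = ∫_{ℝ^{ℓ+1}} Q(x,z|s') Q(z,y|s) dz; that is, the Baxter integral operators Q(s) and Q(s') commute. -/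

import Mathlib

open MeasureTheory

/-- The integral kernel of the Baxter `Q`-operator for the quantum
`gl_{ℓ+1}`-Toda chain:
`Q(x,y|s) = 2^{ℓ+1} exp(Σ_j (is−ρ_j)(x_j−y_j)
  − π Σ_{k=1}^{ℓ}(e^{2(x_k−y_k)} + e^{2(y_{k+1}−x_k)}) − π e^{2(x_{ℓ+1}−y_{ℓ+1})})`,
with `ρ_j = ℓ/2 + 1 − j`. -/
noncomputable def baxterKernel (ℓ : ℕ) (x y : Fin (ℓ+1) → ℝ) (s : ℂ) : ℂ :=
  2 ^ (ℓ+1) *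
    Complex.exp ((∑ j : Fin (ℓ+1),
        (Complex.I * s - ((ℓ : ℂ)/2 + 1 - ((j : ℕ) + 1))) * ((x j - y j : ℝ) : ℂ))
      - (Real.pi : ℂ) * ∑ k : Fin ℓ,
          ((Real.exp (2 * (x k.castSucc - y k.castSucc)) : ℂ)
            + (Real.exp (2 * (y k.succ - x k.castSucc)) : ℂ))
      - (Real.pi : ℂ) * (Real.exp (2 * (x (Fin.last ℓ) - y (Fin.last ℓ))) : ℂ))


noncomputable def f1 (μ : ℂ) (a b t : ℝ) : ℂ :=
  Complex.exp (μ * t - ((a * Real.exp (2*t) + b * Real.exp (-(2*t)) : ℝ) : ℂ))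


lemma integrable_exp_neg_abs : Integrable (fun t : ℝ => Real.exp (-|t|)) := by
  have h1 : IntegrableOn (fun t : ℝ => Real.exp (-|t|)) (Set.Ioi 0) := by
    refine ((exp_neg_integrableOn_Ioi 0 (b := 1) one_pos).congr_fun (fun t ht => ?_)
      measurableSet_Ioi)
    rw [abs_of_pos (by exact ht)]; ring_nf
  have h2 : IntegrableOn (fun t : ℝ => Real.exp (-|t|)) (Set.Iic 0) := by
    refine ((integrableOn_exp_Iic 0).congr_fun (fun t ht => ?_) measurableSet_Iic)
    rw [abs_of_nonpos (by exact ht), neg_neg]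
  have := integrableOn_union.mpr ⟨h2, h1⟩
  rwa [Set.Iic_union_Ioi, integrableOn_univ] at this

lemma exp_bound (c a b : ℝ) (ha : 0 < a) (hb : 0 < b) (t : ℝ) :
    c*t - (a * Real.exp (2*t) + b * Real.exp (-(2*t)))
      ≤ ((c+1)^2/(4*a) + (1-c)^2/(4*b)) - |t| := by
  have hea : Real.exp (2*t) ≥ 0 := (Real.exp_pos _).le
  have heb : Real.exp (-(2*t)) ≥ 0 := (Real.exp_pos _).le
  rcases le_or_gt 0 t with ht | ht
  · have h : t^2 ≤ Real.exp (2*t) := by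
      have := Real.add_one_le_exp t
      nlinarith [Real.exp_pos t, sq_nonneg (1+t), Real.exp_nonneg t,
        (by rw [← Real.exp_add]; ring_nf : Real.exp t * Real.exp t = Real.exp (2*t))]
    rw [abs_of_nonneg ht]
    have key : (c+1)*t - a*t^2 ≤ (c+1)^2/(4*a) := by
      rw [le_div_iff₀ (by positivity : (0:ℝ) < 4*a)]
      nlinarith [sq_nonneg ((c+1) - 2*a*t)]
    nlinarith [div_nonneg (sq_nonneg (1-c)) (by positivity : (0:ℝ) ≤ 4*b),
      mul_le_mul_of_nonneg_left h ha.le]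
  · have h : t^2 ≤ Real.exp (-(2*t)) := by
      have := Real.add_one_le_exp (-t)
      nlinarith [sq_nonneg (1-t), Real.exp_nonneg (-t),
        (by rw [← Real.exp_add]; ring_nf : Real.exp (-t) * Real.exp (-t) = Real.exp (-(2*t)))]
    rw [abs_of_neg ht]
    have key : (c-1)*t - b*t^2 ≤ (1-c)^2/(4*b) := by
      rw [le_div_iff₀ (by positivity : (0:ℝ) < 4*b)]
      nlinarith [sq_nonneg ((1-c) + 2*b*t)]
    nlinarith [div_nonneg (sq_nonneg (c+1)) (by positivity : (0:ℝ) ≤ 4*a),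
      mul_le_mul_of_nonneg_left h hb.le]

lemma norm_f1 (μ : ℂ) (a b t : ℝ) :
    ‖f1 μ a b t‖ = Real.exp (μ.re * t - (a * Real.exp (2*t) + b * Real.exp (-(2*t)))) := by
  rw [f1, Complex.norm_exp, Complex.sub_re, Complex.ofReal_re]
  congr 2
  simp [Complex.mul_re]

lemma continuous_f1 (μ : ℂ) (a b : ℝ) : Continuous (f1 μ a b) := by
  unfold f1
  fun_prop

lemma integrable_f1 (μ : ℂ) {a b : ℝ} (ha : 0 < a) (hb : 0 < b) :
    Integrable (f1 μ a b) := by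
  set K := (μ.re+1)^2/(4*a) + (1-μ.re)^2/(4*b) with hK
  refine Integrable.mono' (g := fun t => Real.exp K * Real.exp (-|t|))
    (integrable_exp_neg_abs.const_mul _) (continuous_f1 μ a b).aestronglyMeasurable
    (Filter.Eventually.of_forall fun t => ?_)
  show _ ≤ Real.exp K * Real.exp (-|t|)
  rw [norm_f1, ← Real.exp_add]
  exact Real.exp_le_exp.mpr (by have := exp_bound μ.re a b ha hb t; rw [hK]; linarith)


lemma stepA (μ : ℂ) (a b c : ℝ) :
    ∫ t : ℝ, f1 μ a b t
      = Complex.exp (μ * c) * ∫ t : ℝ, f1 μ (a * Real.exp (2*c)) (b * Real.exp (-(2*c))) t := by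
  rw [← integral_add_right_eq_self (fun t => f1 μ a b t) c, ← integral_const_mul]
  congr 1; funext t
  unfold f1
  rw [← Complex.exp_add]
  congr 1
  have h1 : a * Real.exp (2*(t+c)) = a * Real.exp (2*c) * Real.exp (2*t) := by
    rw [mul_assoc, ← Real.exp_add]; ring_nf
  have h2 : b * Real.exp (-(2*(t+c))) = b * Real.exp (-(2*c)) * Real.exp (-(2*t)) := by
    rw [mul_assoc, ← Real.exp_add]; ring_nf
  rw [h1, h2]
  push_cast
  ring

lemma stepB (μ : ℂ) (a : ℝ) : ∫ t : ℝ, f1 μ a a t = ∫ t : ℝ, f1 (-μ) a a t := by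
  rw [← integral_neg_eq_self (fun t => f1 μ a a t) volume]
  congr 1; funext t
  unfold f1
  congr 1
  have : a * Real.exp (2 * -t) + a * Real.exp (-(2 * -t))
      = a * Real.exp (2*t) + a * Real.exp (-(2*t)) := by ring_nf
  rw [this]
  push_cast
  ring

lemma oneD (μ : ℂ) {a b : ℝ} (ha : 0 < a) (hb : 0 < b) :
    ∫ t : ℝ, f1 μ a b t
      = Complex.exp (μ * (((Real.log b - Real.log a)/2 : ℝ) : ℂ)) * ∫ t : ℝ, f1 (-μ) a b t := by
  set c : ℝ := (Real.log b - Real.log a)/4 with hc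
  have hgam : a * Real.exp (2*c) = b * Real.exp (-(2*c)) := by
    rw [← Real.exp_log ha, ← Real.exp_log hb, ← Real.exp_add, ← Real.exp_add]
    congr 1; rw [hc]; ring
  have hA := stepA μ a b c
  have hA' := stepA (-μ) a b c
  rw [hgam] at hA hA'
  rw [hA, hA', stepB μ (b * Real.exp (-(2*c))), ← mul_assoc, ← Complex.exp_add]
  congr 2
  push_cast [hc]
  ring

noncomputable def alphas (ℓ : ℕ) (x y : Fin (ℓ+1) → ℝ) : Fin (ℓ+1) → ℝ :=
  Fin.lastCases (Real.exp (2 * x (Fin.last ℓ)))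
    (fun k => Real.exp (2 * x k.castSucc) + Real.exp (2 * y k.succ))

noncomputable def betas (ℓ : ℕ) (x y : Fin (ℓ+1) → ℝ) : Fin (ℓ+1) → ℝ :=
  Fin.cases (Real.exp (-(2 * y 0)))
    (fun k => Real.exp (-(2 * y k.succ)) + Real.exp (-(2 * x k.castSucc)))

lemma alphas_pos (ℓ : ℕ) (x y : Fin (ℓ+1) → ℝ) (j : Fin (ℓ+1)) : 0 < alphas ℓ x y j := by
  unfold alphas
  induction j using Fin.lastCases with
  | last => rw [Fin.lastCases_last]; positivity
  | cast k => rw [Fin.lastCases_castSucc]; positivity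

lemma betas_pos (ℓ : ℕ) (x y : Fin (ℓ+1) → ℝ) (j : Fin (ℓ+1)) : 0 < betas ℓ x y j := by
  unfold betas
  induction j using Fin.cases with
  | zero => rw [Fin.cases_zero]; positivity
  | succ k => rw [Fin.cases_succ]; positivity

-- sum of alphas-terms
lemma S1 (ℓ : ℕ) (x y z : Fin (ℓ+1) → ℝ) :
    ∑ j, alphas ℓ x y j * Real.exp (-(2 * z j))
      = (∑ k : Fin ℓ, (Real.exp (2 * (x k.castSucc - z k.castSucc))
          + Real.exp (2 * (y k.succ - z k.castSucc))))
        + Real.exp (2 * (x (Fin.last ℓ) - z (Fin.last ℓ))) := by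
  rw [Fin.sum_univ_castSucc]
  unfold alphas
  simp only [Fin.lastCases_last, Fin.lastCases_castSucc]
  congr 1
  · refine Finset.sum_congr rfl fun k _ => ?_
    rw [add_mul, ← Real.exp_add, ← Real.exp_add]
    ring_nf
  · rw [← Real.exp_add]; ring_nf

lemma S2 (ℓ : ℕ) (x y z : Fin (ℓ+1) → ℝ) :
    ∑ j, betas ℓ x y j * Real.exp (2 * z j)
      = ((∑ k : Fin ℓ, Real.exp (2 * (z k.castSucc - y k.castSucc)))
          + Real.exp (2 * (z (Fin.last ℓ) - y (Fin.last ℓ))))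
        + ∑ k : Fin ℓ, Real.exp (2 * (z k.succ - x k.castSucc)) := by
  rw [Fin.sum_univ_succ]
  unfold betas
  simp only [Fin.cases_zero, Fin.cases_succ]
  have h0 : Real.exp (-(2 * y 0)) * Real.exp (2 * z 0) = Real.exp (2 * (z 0 - y 0)) := by
    rw [← Real.exp_add]; ring_nf
  have h1 : ∀ k : Fin ℓ, (Real.exp (-(2 * y k.succ)) + Real.exp (-(2 * x k.castSucc)))
        * Real.exp (2 * z k.succ)
      = Real.exp (2 * (z k.succ - y k.succ)) + Real.exp (2 * (z k.succ - x k.castSucc)) := by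
    intro k
    rw [add_mul, ← Real.exp_add, ← Real.exp_add]
    ring_nf
  rw [h0, Finset.sum_congr rfl (fun k _ => h1 k), Finset.sum_add_distrib]
  have hz : (∑ k : Fin ℓ, Real.exp (2 * (z k.castSucc - y k.castSucc)))
        + Real.exp (2 * (z (Fin.last ℓ) - y (Fin.last ℓ)))
      = ∑ j, Real.exp (2 * (z j - y j)) := (Fin.sum_univ_castSucc (fun j => Real.exp (2 * (z j - y j)))).symm
  rw [hz, Fin.sum_univ_succ]
  ring

lemma Lsum (ℓ : ℕ) (s s' : ℂ) (x y z : Fin (ℓ+1) → ℝ) :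
    (∑ j : Fin (ℓ+1), (Complex.I * s - ((ℓ : ℂ)/2 + 1 - ((j : ℕ) + 1))) * ((x j - z j : ℝ) : ℂ))
      + ∑ j : Fin (ℓ+1), (Complex.I * s' - ((ℓ : ℂ)/2 + 1 - ((j : ℕ) + 1))) * ((z j - y j : ℝ) : ℂ)
    = (∑ j : Fin (ℓ+1), ((Complex.I * s - ((ℓ : ℂ)/2 + 1 - ((j : ℕ) + 1))) * ((x j : ℝ) : ℂ)
          - (Complex.I * s' - ((ℓ : ℂ)/2 + 1 - ((j : ℕ) + 1))) * ((y j : ℝ) : ℂ)))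
      + (Complex.I * (s' - s)) * (((∑ j, z j : ℝ) : ℂ)) := by
  have h : (Complex.I * (s' - s)) * (((∑ j, z j : ℝ) : ℂ))
      = ∑ j : Fin (ℓ+1), (Complex.I * (s' - s)) * ((z j : ℝ) : ℂ) := by
    push_cast
    rw [Finset.mul_sum]
  rw [h, ← Finset.sum_add_distrib, ← Finset.sum_add_distrib]
  refine Finset.sum_congr rfl fun j _ => ?_
  push_cast
  ring

lemma ker_factor (ℓ : ℕ) (s s' : ℂ) (x y z : Fin (ℓ+1) → ℝ) :
    baxterKernel ℓ x z s * baxterKernel ℓ z y s'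
      = (2:ℂ)^(ℓ+1) * 2^(ℓ+1)
        * Complex.exp (∑ j : Fin (ℓ+1),
            ((Complex.I * s - ((ℓ : ℂ)/2 + 1 - ((j : ℕ) + 1))) * ((x j : ℝ) : ℂ)
              - (Complex.I * s' - ((ℓ : ℂ)/2 + 1 - ((j : ℕ) + 1))) * ((y j : ℝ) : ℂ)))
        * ∏ j, f1 (Complex.I*(s'-s))
            (Real.pi * betas ℓ x y j) (Real.pi * alphas ℓ x y j) (z j) := by
  unfold baxterKernel f1
  rw [← Complex.exp_sum]
  rw [mul_mul_mul_comm, ← Complex.exp_add, mul_assoc ((2:ℂ)^(ℓ+1) * 2^(ℓ+1)), ← Complex.exp_add]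
  congr 1
  -- now the exponent identity
  have hw : (∑ j : Fin (ℓ+1), ((Complex.I*(s'-s)) * ((z j : ℝ) : ℂ)
        - (((Real.pi * betas ℓ x y j * Real.exp (2 * z j)
            + Real.pi * alphas ℓ x y j * Real.exp (-(2 * z j))) : ℝ) : ℂ)))
      = (Complex.I * (s' - s)) * (((∑ j, z j : ℝ) : ℂ))
        - ((Real.pi : ℂ) * (((∑ j, betas ℓ x y j * Real.exp (2 * z j)) : ℝ) : ℂ)
          + (Real.pi : ℂ) * (((∑ j, alphas ℓ x y j * Real.exp (-(2 * z j))) : ℝ) : ℂ)) := by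
    rw [Finset.sum_sub_distrib]
    congr 1
    · push_cast
      rw [Finset.mul_sum]
    · push_cast
      rw [Finset.sum_add_distrib, Finset.mul_sum, Finset.mul_sum]
      simp [mul_assoc]
  rw [hw, S1, S2]
  congr 1
  have hL := Lsum ℓ s s' x y z
  push_cast at hL ⊢
  simp only [Finset.sum_add_distrib] at hL ⊢
  linear_combination hL

lemma sumlog (ℓ : ℕ) (x y : Fin (ℓ+1) → ℝ) :
    ∑ j, (Real.log (alphas ℓ x y j) - Real.log (betas ℓ x y j)) = ∑ j, (2 * x j + 2 * y j) := by
  have ha : ∑ j, Real.log (alphas ℓ x y j)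
      = (∑ k : Fin ℓ, Real.log (Real.exp (2 * x k.castSucc) + Real.exp (2 * y k.succ)))
        + 2 * x (Fin.last ℓ) := by
    rw [Fin.sum_univ_castSucc]
    unfold alphas
    simp [Real.log_exp]
  have hb : ∑ j, Real.log (betas ℓ x y j)
      = -(2 * y 0) + ∑ k : Fin ℓ,
          (Real.log (Real.exp (2 * x k.castSucc) + Real.exp (2 * y k.succ))
            - 2 * x k.castSucc - 2 * y k.succ) := by
    rw [Fin.sum_univ_succ]
    unfold betas
    simp only [Fin.cases_zero, Fin.cases_succ, Real.log_exp]
    congr 1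
    refine Finset.sum_congr rfl fun k _ => ?_
    have hprod : Real.exp (-(2 * y k.succ)) + Real.exp (-(2 * x k.castSucc))
        = Real.exp (-(2 * x k.castSucc) + -(2 * y k.succ))
          * (Real.exp (2 * x k.castSucc) + Real.exp (2 * y k.succ)) := by
      rw [mul_add, ← Real.exp_add, ← Real.exp_add]
      ring_nf
    rw [hprod, Real.log_mul (Real.exp_ne_zero _) (by positivity), Real.log_exp]
    ring
  rw [Finset.sum_sub_distrib, ha, hb, Finset.sum_add_distrib,
    Fin.sum_univ_castSucc (fun j => 2 * x j), Fin.sum_univ_succ (fun j => 2 * y j)]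
  simp only [Finset.sum_sub_distrib]
  ring

lemma sumlog' (ℓ : ℕ) (x y : Fin (ℓ+1) → ℝ) :
    ∑ j, (Real.log (Real.pi * alphas ℓ x y j) - Real.log (Real.pi * betas ℓ x y j))/2
      = ∑ j, (x j + y j) := by
  have h1 : ∀ j : Fin (ℓ+1),
      (Real.log (Real.pi * alphas ℓ x y j) - Real.log (Real.pi * betas ℓ x y j))/2
        = (Real.log (alphas ℓ x y j) - Real.log (betas ℓ x y j))/2 := by
    intro j
    rw [Real.log_mul Real.pi_ne_zero (alphas_pos ℓ x y j).ne',
      Real.log_mul Real.pi_ne_zero (betas_pos ℓ x y j).ne']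
    ring
  rw [Finset.sum_congr rfl (fun j _ => h1 j), ← Finset.sum_div, sumlog, Finset.sum_div]
  exact Finset.sum_congr rfl fun j _ => by ring


/-- The Baxter integral operators `Q(s)` and `Q(s')` commute: both iterated
kernels converge absolutely and
`∫ Q(x,z|s) Q(z,y|s') dz = ∫ Q(x,z|s') Q(z,y|s) dz`. -/
theorem baxterKernel_commute (ℓ : ℕ) (s s' : ℂ) (x y : Fin (ℓ+1) → ℝ) :
    Integrable (fun z : Fin (ℓ+1) → ℝ => baxterKernel ℓ x z s * baxterKernel ℓ z y s') ∧
    Integrable (fun z : Fin (ℓ+1) → ℝ => baxterKernel ℓ x z s' * baxterKernel ℓ z y s) ∧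
    (∫ z : Fin (ℓ+1) → ℝ, baxterKernel ℓ x z s * baxterKernel ℓ z y s')
      = ∫ z : Fin (ℓ+1) → ℝ, baxterKernel ℓ x z s' * baxterKernel ℓ z y s := by

  have hap : ∀ j, 0 < Real.pi * alphas ℓ x y j :=
    fun j => mul_pos Real.pi_pos (alphas_pos ℓ x y j)
  have hbp : ∀ j, 0 < Real.pi * betas ℓ x y j :=
    fun j => mul_pos Real.pi_pos (betas_pos ℓ x y j)
  have hint : ∀ ν : ℂ, Integrable (fun zz : Fin (ℓ+1) → ℝ =>
      ∏ j, f1 ν (Real.pi * betas ℓ x y j) (Real.pi * alphas ℓ x y j) (zz j)) :=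
    fun ν => Integrable.fintype_prod (fun j => integrable_f1 ν (hbp j) (hap j))
  set μ : ℂ := Complex.I * (s' - s) with hμ
  have hμ' : Complex.I * (s - s') = -μ := by rw [hμ]; ring
  have hf1 : (fun z : Fin (ℓ+1) → ℝ => baxterKernel ℓ x z s * baxterKernel ℓ z y s')
      = fun z => (2:ℂ)^(ℓ+1) * 2^(ℓ+1)
        * Complex.exp (∑ j : Fin (ℓ+1),
            ((Complex.I * s - ((ℓ : ℂ)/2 + 1 - ((j : ℕ) + 1))) * ((x j : ℝ) : ℂ)
              - (Complex.I * s' - ((ℓ : ℂ)/2 + 1 - ((j : ℕ) + 1))) * ((y j : ℝ) : ℂ)))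
        * ∏ j, f1 μ (Real.pi * betas ℓ x y j) (Real.pi * alphas ℓ x y j) (z j) :=
    funext fun z => ker_factor ℓ s s' x y z
  have hf2 : (fun z : Fin (ℓ+1) → ℝ => baxterKernel ℓ x z s' * baxterKernel ℓ z y s)
      = fun z => (2:ℂ)^(ℓ+1) * 2^(ℓ+1)
        * Complex.exp (∑ j : Fin (ℓ+1),
            ((Complex.I * s' - ((ℓ : ℂ)/2 + 1 - ((j : ℕ) + 1))) * ((x j : ℝ) : ℂ)
              - (Complex.I * s - ((ℓ : ℂ)/2 + 1 - ((j : ℕ) + 1))) * ((y j : ℝ) : ℂ)))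
        * ∏ j, f1 (-μ) (Real.pi * betas ℓ x y j) (Real.pi * alphas ℓ x y j) (z j) := by
    rw [← hμ']
    exact funext fun z => ker_factor ℓ s' s x y z
  refine ⟨?_, ?_, ?_⟩
  · rw [hf1]
    exact (hint μ).const_mul _
  · rw [hf2]
    exact (hint (-μ)).const_mul _
  · rw [hf1, hf2]
    simp only [mul_assoc]
    simp only [integral_const_mul]
    rw [integral_fintype_prod_volume_eq_prod (ι := Fin (ℓ+1))
        (fun j t => f1 μ (Real.pi * betas ℓ x y j) (Real.pi * alphas ℓ x y j) t),
      integral_fintype_prod_volume_eq_prod (ι := Fin (ℓ+1))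
        (fun j t => f1 (-μ) (Real.pi * betas ℓ x y j) (Real.pi * alphas ℓ x y j) t)]
    have hj : ∀ j : Fin (ℓ+1),
        (∫ t : ℝ, f1 μ (Real.pi * betas ℓ x y j) (Real.pi * alphas ℓ x y j) t)
          = Complex.exp (μ * (((Real.log (Real.pi * alphas ℓ x y j)
                - Real.log (Real.pi * betas ℓ x y j))/2 : ℝ) : ℂ))
            * ∫ t : ℝ, f1 (-μ) (Real.pi * betas ℓ x y j) (Real.pi * alphas ℓ x y j) t :=
      fun j => oneD μ (hbp j) (hap j)
    rw [Finset.prod_congr rfl (fun j _ => hj j), Finset.prod_mul_distrib, ← Complex.exp_sum]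
    have hdsum : ∑ j : Fin (ℓ+1), μ * (((Real.log (Real.pi * alphas ℓ x y j)
          - Real.log (Real.pi * betas ℓ x y j))/2 : ℝ) : ℂ)
        = μ * (((∑ j, (x j + y j) : ℝ)) : ℂ) := by
      rw [← Finset.mul_sum]
      congr 1
      rw [← sumlog' ℓ x y]
      push_cast
      rfl
    rw [hdsum]
    have hA : (∑ j : Fin (ℓ+1),
          ((Complex.I * s - ((ℓ : ℂ)/2 + 1 - ((j : ℕ) + 1))) * ((x j : ℝ) : ℂ)
            - (Complex.I * s' - ((ℓ : ℂ)/2 + 1 - ((j : ℕ) + 1))) * ((y j : ℝ) : ℂ)))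
          + μ * (((∑ j, (x j + y j) : ℝ)) : ℂ)
        = ∑ j : Fin (ℓ+1),
          ((Complex.I * s' - ((ℓ : ℂ)/2 + 1 - ((j : ℕ) + 1))) * ((x j : ℝ) : ℂ)
            - (Complex.I * s - ((ℓ : ℂ)/2 + 1 - ((j : ℕ) + 1))) * ((y j : ℝ) : ℂ)) := by
      have h : μ * (((∑ j, (x j + y j) : ℝ)) : ℂ)
          = ∑ j : Fin (ℓ+1), μ * (((x j + y j : ℝ)) : ℂ) := by
        push_cast
        rw [Finset.mul_sum]
      rw [h, ← Finset.sum_add_distrib]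
      refine Finset.sum_congr rfl fun j _ => ?_
      rw [hμ]
      push_cast
      ring
    have hexp : Complex.exp (∑ j : Fin (ℓ+1),
          ((Complex.I * s - ((ℓ : ℂ)/2 + 1 - ((j : ℕ) + 1))) * ((x j : ℝ) : ℂ)
            - (Complex.I * s' - ((ℓ : ℂ)/2 + 1 - ((j : ℕ) + 1))) * ((y j : ℝ) : ℂ)))
          * Complex.exp (μ * (((∑ j, (x j + y j) : ℝ)) : ℂ))
        = Complex.exp (∑ j : Fin (ℓ+1),
          ((Complex.I * s' - ((ℓ : ℂ)/2 + 1 - ((j : ℕ) + 1))) * ((x j : ℝ) : ℂ)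
            - (Complex.I * s - ((ℓ : ℂ)/2 + 1 - ((j : ℕ) + 1))) * ((y j : ℝ) : ℂ))) := by
      rw [← Complex.exp_add, hA]
    linear_combination ((2:ℂ)^(ℓ+1) * 2^(ℓ+1)
      * ∏ j, ∫ t : ℝ, f1 (-μ) (Real.pi * betas ℓ x y j) (Real.pi * alphas ℓ x y j) t) * hexp
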